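/- Let T > 0, m₀ ∈ ℝ, L_m ∈ (0,1), let b : ℝ × ℝ × [0,T] → ℝ be continuous and L_m-Lipschitz in its first argument, let l : [0,T] → ℝ and x : [0,T] → ℝ be continuous, and let w be the unique continuous solution of w(t) = x(t) − sup_{0≤s≤t}(x(s) − b(M(w)(s), l(s), s))⁺. Define k(t) = sup_{0≤s≤t}(x(s) − b(M(w)(s), l(s), s))⁺. Then: (a) k is nondecreasing on [0,T]; (b) w(t) ≤ b(M(w)(t), l(t), t) for every t ∈ [0,T]; (c) if 0 ≤ t₁ < t₂ ≤ T and w(s) < b(M(w)(s), l(s), s) for all s ∈ (t₁, t₂], then k(t₂) = k(t₁); that is, the reflection term increases only when the path is on the boundary. -/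

import Mathlib

open Set

/-- Running minimum of a continuous path `w` on `[0,T]`, started at level `m₀`:
`M(w)(t) = min(m₀, inf_{0 ≤ s ≤ t} w(s))`. -/
noncomputable def runMin (T m₀ : ℝ) (w : C(Set.Icc (0:ℝ) T, ℝ))
    (t : Set.Icc (0:ℝ) T) : ℝ :=
  min m₀ (sInf (w '' Set.Iic t))

/-- The Skorokhod-type map `w ↦ (t ↦ x(t) − sup_{0≤s≤t} (x(s) − b(M(w)(s), l(s), s))⁺)`. -/
noncomputable def skMap (T m₀ : ℝ) (b : ℝ → ℝ → Set.Icc (0:ℝ) T → ℝ)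
    (l x : C(Set.Icc (0:ℝ) T, ℝ)) (w : C(Set.Icc (0:ℝ) T, ℝ))
    (t : Set.Icc (0:ℝ) T) : ℝ :=
  x t - sSup ((fun s => max (x s - b (runMin T m₀ w s) (l s) s) 0) '' Set.Iic t)

/-- The reflection term `k(t) = sup_{0≤s≤t} (x(s) − b(M(w)(s), l(s), s))⁺`. -/
noncomputable def reflTerm (T m₀ : ℝ) (b : ℝ → ℝ → Set.Icc (0:ℝ) T → ℝ)
    (l x : C(Set.Icc (0:ℝ) T, ℝ)) (w : C(Set.Icc (0:ℝ) T, ℝ))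
    (t : Set.Icc (0:ℝ) T) : ℝ :=
  sSup ((fun s => max (x s - b (runMin T m₀ w s) (l s) s) 0) '' Set.Iic t)

/-- The running minimum of a continuous path is continuous. -/
lemma runMin_cont (T m₀ : ℝ) (w : C(Set.Icc (0:ℝ) T, ℝ)) :
    Continuous (runMin T m₀ w) := by
  unfold runMin
  refine continuous_const.min ?_
  have hbb : BddBelow (range w) := (isCompact_range w.continuous).bddBelow
  have hbb' : ∀ t : Set.Icc (0:ℝ) T, BddBelow (w '' Set.Iic t) :=
    fun t => hbb.mono (image_subset_range _ _)
  have hne : ∀ t : Set.Icc (0:ℝ) T, (w '' Set.Iic t).Nonempty :=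
    fun t => ⟨w t, mem_image_of_mem _ (mem_Iic.mpr le_rfl)⟩
  set h : Set.Icc (0:ℝ) T → ℝ := fun t => sInf (w '' Set.Iic t) with hhdef
  have hanti : ∀ a c : Set.Icc (0:ℝ) T, a ≤ c → h c ≤ h a := fun a c hac =>
    csInf_le_csInf (hbb' c) (hne a) (image_mono (Iic_subset_Iic.mpr hac))
  have hale : ∀ t : Set.Icc (0:ℝ) T, h t ≤ w t :=
    fun t => csInf_le (hbb' t) (mem_image_of_mem _ (mem_Iic.mpr le_rfl))
  have huc : UniformContinuous w :=
    CompactSpace.uniformContinuous_of_continuous w.continuous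
  rw [Metric.continuous_iff]
  intro t ε hε
  obtain ⟨δ, hδ, hδ'⟩ := Metric.uniformContinuous_iff.mp huc (ε / 2) (by linarith)
  refine ⟨δ, hδ, fun s hs => ?_⟩
  have key : ∀ a c : Set.Icc (0:ℝ) T, a ≤ c → dist a c < δ → h a - ε / 2 ≤ h c := by
    intro a c hac hd
    refine le_csInf (hne c) ?_
    rintro y ⟨u, hu, rfl⟩
    rcases le_or_gt u a with h1 | h1
    · have := csInf_le (hbb' a) (mem_image_of_mem w (mem_Iic.mpr h1))
      linarith
    · have hd2 : dist u a < δ := by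
        rw [Subtype.dist_eq, Real.dist_eq] at hd ⊢
        have h1' : (a : ℝ) < u := h1
        have h2' : (u : ℝ) ≤ c := hu
        have h3' : (a : ℝ) ≤ c := hac
        rw [abs_of_nonneg (by linarith)]
        rw [abs_of_nonpos (by linarith)] at hd
        linarith
      have h4 := hδ' hd2
      rw [Real.dist_eq] at h4
      have h5 := abs_lt.mp h4
      have h6 := hale a
      linarith [h5.1, h5.2]
  rw [Real.dist_eq, abs_lt]
  rcases le_total s t with hst | hst
  · have h1 := hanti s t hst
    have h2 := key s t hst hs
    constructor <;> linarith
  · have h1 := hanti t s hst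
    have h2 := key t s hst (by rw [dist_comm]; exact hs)
    constructor <;> linarith

/-- Properties of the solution of the reflection fixed-point problem: the
reflection term `k` is nondecreasing, the path stays below the boundary, and
`k` increases only when the path is on the boundary. -/
theorem stmt2 (T m₀ Lm : ℝ) (hT : 0 < T) (hLm : Lm ∈ Set.Ioo (0:ℝ) 1)
    (b : ℝ → ℝ → Set.Icc (0:ℝ) T → ℝ)
    (hb : Continuous fun p : ℝ × ℝ × Set.Icc (0:ℝ) T => b p.1 p.2.1 p.2.2)
    (hbLip : ∀ (m m' y : ℝ) (t : Set.Icc (0:ℝ) T),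
      |b m y t - b m' y t| ≤ Lm * |m - m'|)
    (l x w : C(Set.Icc (0:ℝ) T, ℝ))
    (hw : ∀ t : Set.Icc (0:ℝ) T, w t = skMap T m₀ b l x w t) :
    Monotone (reflTerm T m₀ b l x w) ∧
    (∀ t : Set.Icc (0:ℝ) T, w t ≤ b (runMin T m₀ w t) (l t) t) ∧
    (∀ t₁ t₂ : Set.Icc (0:ℝ) T, t₁ < t₂ →
      (∀ s : Set.Icc (0:ℝ) T, t₁ < s → s ≤ t₂ →
        w s < b (runMin T m₀ w s) (l s) s) →
      reflTerm T m₀ b l x w t₂ = reflTerm T m₀ b l x w t₁) := by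
  set f : Set.Icc (0:ℝ) T → ℝ :=
    fun s => max (x s - b (runMin T m₀ w s) (l s) s) 0 with hfdef
  have hfc : Continuous f := by
    refine Continuous.max ?_ continuous_const
    exact x.continuous.sub
      (hb.comp ((runMin_cont T m₀ w).prodMk (l.continuous.prodMk continuous_id)))
  have hbdd : BddAbove (range f) := (isCompact_range hfc).bddAbove
  have hbdd' : ∀ t, BddAbove (f '' Set.Iic t) :=
    fun t => hbdd.mono (image_subset_range _ _)
  have hne : ∀ t, (f '' Set.Iic t).Nonempty :=
    fun t => ⟨f t, mem_image_of_mem _ (mem_Iic.mpr le_rfl)⟩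
  have hk : ∀ t, reflTerm T m₀ b l x w t = sSup (f '' Set.Iic t) := fun t => rfl
  have hmono : Monotone (reflTerm T m₀ b l x w) := by
    intro t₁ t₂ h12
    rw [hk, hk]
    exact csSup_le_csSup (hbdd' t₂) (hne t₁) (image_mono (Iic_subset_Iic.mpr h12))
  have hfle : ∀ t, f t ≤ reflTerm T m₀ b l x w t :=
    fun t => le_csSup (hbdd' t) (mem_image_of_mem _ (mem_Iic.mpr le_rfl))
  have hw' : ∀ t, w t = x t - reflTerm T m₀ b l x w t := hw
  have hwb : ∀ t, w t ≤ b (runMin T m₀ w t) (l t) t := by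
    intro t
    have h1 := hw' t
    have h2 : x t - b (runMin T m₀ w t) (l t) t ≤ f t := le_max_left _ _
    have h3 := hfle t
    linarith
  refine ⟨hmono, hwb, ?_⟩
  intro t₁ t₂ h12 hs
  refine le_antisymm ?_ (hmono h12.le)
  have hIcc : Set.Iic t₂ = Set.Iic t₁ ∪ Set.Icc t₁ t₂ := (Iic_union_Icc_eq_Iic h12.le).symm
  have hcpt : IsCompact (Set.Icc t₁ t₂) := by
    have heq : Set.Icc t₁ t₂ = Subtype.val ⁻¹' Set.Icc (t₁ : ℝ) (t₂ : ℝ) := by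
      ext s; simp [Subtype.coe_le_coe]
    rw [heq]
    exact (isClosed_Icc.preimage continuous_subtype_val).isCompact
  obtain ⟨u, hu, hmax⟩ :=
    hcpt.exists_isMaxOn ⟨t₁, le_rfl, h12.le⟩ hfc.continuousOn
  have hsup2 : sSup (f '' Set.Icc t₁ t₂) = f u :=
    IsGreatest.csSup_eq ⟨mem_image_of_mem _ hu, by rintro y ⟨v, hv, rfl⟩; exact hmax hv⟩
  have hsplit : reflTerm T m₀ b l x w t₂ = max (reflTerm T m₀ b l x w t₁) (f u) := by
    rw [hk, hk, hIcc, image_union,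
      csSup_union (hbdd' t₁) (hne t₁)
        (hbdd.mono (image_subset_range _ _))
        ⟨f t₁, mem_image_of_mem _ (mem_Icc.mpr ⟨le_rfl, h12.le⟩)⟩,
      hsup2]
  have hfu : f u ≤ reflTerm T m₀ b l x w t₁ := by
    rcases eq_or_lt_of_le hu.1 with heq | hlt
    · rw [← heq]; exact hfle t₁
    · by_contra hcon
      push_neg at hcon
      have hk2 : reflTerm T m₀ b l x w t₂ = f u := by
        rw [hsplit, max_eq_right hcon.le]
      have h0' : (0:ℝ) ≤ f t₁ := le_max_right _ _
      have h0 : 0 ≤ reflTerm T m₀ b l x w t₁ := le_trans h0' (hfle t₁)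
      have hfupos : 0 < f u := lt_of_le_of_lt h0 hcon
      have hg0 : 0 ≤ x u - b (runMin T m₀ w u) (l u) u := by
        by_contra hneg
        push_neg at hneg
        have : f u = 0 := max_eq_right hneg.le
        linarith
      have hgu : f u = x u - b (runMin T m₀ w u) (l u) u := max_eq_left hg0
      have hws := hs u hlt hu.2
      have hwu := hw' u
      have hku2 : reflTerm T m₀ b l x w u ≤ reflTerm T m₀ b l x w t₂ := hmono hu.2
      linarith
  rw [hsplit]
  exact max_le le_rfl hfu
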